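/- Suppose ε_i > 0 for all i. Then: (a) P̄⁺(ε) = P̂⁺(ε); (b) π_i(p) = π̂_i(p,ε_i) for every p ∈ P̂⁺(ε) and every i ∈ Ī; (c) v̄^D(ε) = v̂^D(ε). In other words, in the dual problem the capacity truncation x ≤ x_i^c,max + ε_i can be dropped for every non-LNMGU generator without changing the set of dual maximizers, the optimal profits of the non-LNMGU generators at those maximizers, or the dual optimal value. -/

import Mathlib

noncomputable section

/-- Feasible set of a single generator with capacity `xmax`. -/
def Gen (xmax : ℝ) : Set (ℝ × ℝ) :=
  {ux | (ux.1 = 0 ∨ ux.1 = 1) ∧ 0 ≤ ux.2 ∧ ux.2 ≤ ux.1 * xmax}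

/-- Cost of a generator. -/
def Cost (w : ℝ) (c : ℝ → ℝ) (ux : ℝ × ℝ) : ℝ := w * ux.1 + c ux.2

/-- Upper bound `x^c,max` of possible output volumes of generator `i`. -/
def xcmax (n : ℕ) (xmax : Fin n → ℝ) (d : ℝ) (i : Fin n) : ℝ :=
  min d (xmax i)

/-- The relaxed modified feasible set `Ĝ_i(ε)`. -/
def Ghat (xmax xcmax ε : ℝ) : Set (ℝ × ℝ) :=
  {ux ∈ Gen xmax | ux.2 ≤ xcmax + ε}

open Set Filter

lemma gen_y_le {xm : ℝ} (hxm : 0 ≤ xm) {ux : ℝ × ℝ} (h : ux ∈ Gen xm) : ux.2 ≤ xm := by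
  rcases h.1 with h1 | h1 <;> rcases h with ⟨-, h2, h3⟩ <;> rw [h1] at h3 <;> nlinarith

lemma greatest_mono {w xm : ℝ} {c : ℝ → ℝ} {S : Set (ℝ × ℝ)} (hS : S ⊆ Gen xm)
    {p q Tp Tq : ℝ}
    (hq : IsGreatest ((fun ux => q * ux.2 - Cost w c ux) '' S) Tq)
    (hp : IsGreatest ((fun ux => p * ux.2 - Cost w c ux) '' S) Tp)
    (hqp : q ≤ p) : Tq ≤ Tp := by
  obtain ⟨ux, hmem, heq⟩ := hq.1
  have heq' : q * ux.2 - Cost w c ux = Tq := heq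
  have h0 : 0 ≤ ux.2 := (hS hmem).2.1
  have h1 : p * ux.2 - Cost w c ux ≤ Tp := hp.2 ⟨ux, hmem, rfl⟩
  nlinarith [heq']

lemma greatest_lip {w xm : ℝ} {c : ℝ → ℝ} {S : Set (ℝ × ℝ)} (hxm : 0 ≤ xm) (hS : S ⊆ Gen xm)
    {p q Tp Tq : ℝ}
    (hq : IsGreatest ((fun ux => q * ux.2 - Cost w c ux) '' S) Tq)
    (hp : IsGreatest ((fun ux => p * ux.2 - Cost w c ux) '' S) Tp)
    (hqp : q ≤ p) : Tp - Tq ≤ (p - q) * xm := by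
  obtain ⟨ux, hmem, heq⟩ := hp.1
  have heq' : p * ux.2 - Cost w c ux = Tp := heq
  have h2 : q * ux.2 - Cost w c ux ≤ Tq := hq.2 ⟨ux, hmem, rfl⟩
  have h3 : ux.2 ≤ xm := gen_y_le hxm (hS hmem)
  have h4 : 0 ≤ ux.2 := (hS hmem).2.1
  nlinarith [heq']

lemma conv_ineq {xm : ℝ} {c : ℝ → ℝ} (hconv : ConvexOn ℝ (Icc 0 xm) c) {a b t : ℝ}
    (ha : a ∈ Icc 0 xm) (hb : b ∈ Icc 0 xm) (h1 : a ≤ t) (h2 : t ≤ b) :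
    c t * (b - a) ≤ (b - t) * c a + (t - a) * c b := by
  rcases eq_or_lt_of_le (h1.trans h2) with h | h
  · have ht : t = a := le_antisymm (h ▸ h2) h1
    rw [← h, ht]; simp [sub_self]
  · have hba : (0:ℝ) < b - a := sub_pos.2 h
    have h3 : (b - t)/(b - a) + (t - a)/(b - a) = 1 := by
      rw [← add_div, div_eq_one_iff_eq hba.ne']; ring
    have h4 := hconv.2 ha hb (div_nonneg (by linarith) hba.le) (div_nonneg (by linarith) hba.le) h3
    have h5 : ((b - t)/(b - a)) • a + ((t - a)/(b - a)) • b = t := by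
      rw [smul_eq_mul, smul_eq_mul, div_mul_eq_mul_div, div_mul_eq_mul_div, ← add_div,
        div_eq_iff hba.ne']; ring
    rw [h5] at h4
    simp only [smul_eq_mul] at h4
    have h6 := mul_le_mul_of_nonneg_right h4 hba.le
    have hne : b - a ≠ 0 := hba.ne'
    field_simp at h6
    nlinarith [h6]

lemma deriv_le_slope {xm : ℝ} {c : ℝ → ℝ} (hconv : ConvexOn ℝ (Icc 0 xm) c) {y0 x D : ℝ}
    (hy0 : 0 ≤ y0) (hx : y0 < x) (hxm : x ≤ xm)
    (hder : HasDerivWithinAt c D (Icc y0 xm) y0) :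
    D * (x - y0) ≤ c x - c y0 := by
  have hy0xm : y0 < xm := lt_of_lt_of_le hx hxm
  have hsub : Ioc y0 xm ⊆ Icc y0 xm \ {y0} := by
    intro t ht
    exact ⟨⟨ht.1.le, ht.2⟩, ne_of_gt ht.1⟩
  have hne : (nhdsWithin y0 (Icc y0 xm \ {y0})).NeBot := by
    have h1 : (nhdsWithin y0 (Ioc y0 xm)).NeBot := by
      rw [← mem_closure_iff_nhdsWithin_neBot, closure_Ioc hy0xm.ne]
      exact ⟨le_refl _, hy0xm.le⟩
    exact h1.mono (nhdsWithin_mono _ hsub)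
  have htend := hasDerivWithinAt_iff_tendsto_slope.1 hder
  have hev : ∀ᶠ t in nhdsWithin y0 (Icc y0 xm \ {y0}), slope c y0 t ≤ (c x - c y0)/(x - y0) := by
    have h1 : ∀ᶠ t in nhdsWithin y0 (Icc y0 xm \ {y0}), t < x :=
      eventually_nhdsWithin_of_eventually_nhds (Filter.Tendsto.eventually_lt_const hx tendsto_id)
    filter_upwards [h1, eventually_mem_nhdsWithin] with t htx htm
    obtain ⟨⟨ht1, ht2⟩, ht3⟩ := htm
    have ht1' : y0 < t := lt_of_le_of_ne ht1 (Ne.symm ht3)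
    have hci := conv_ineq hconv ⟨hy0, hy0xm.le⟩ ⟨hy0.trans hx.le, hxm⟩ (le_of_lt ht1') htx.le
    rw [slope_def_field, div_le_div_iff₀ (by linarith) (by linarith)]
    nlinarith [hci]
  have hD : D ≤ (c x - c y0)/(x - y0) := le_of_tendsto htend hev
  rw [le_div_iff₀ (by linarith)] at hD
  linarith

lemma drop {d w xm : ℝ} {c : ℝ → ℝ} {S : Set (ℝ × ℝ)} (hS : S ⊆ Gen xm)
    {T : ℝ → ℝ} (hT : ∀ q, IsGreatest ((fun ux => q * ux.2 - Cost w c ux) '' S) (T q))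
    {p m s δ : ℝ} (hm : ((1:ℝ), m) ∈ S) (hdm : d < m)
    (hTm : T p = p * m - (w + c m))
    (hdom : ∀ ux ∈ S, ux.2 ≤ d → p * ux.2 - Cost w c ux ≤ T p - s * (m - ux.2))
    (hδ : 0 < δ) (hδs : δ < s) : δ * d < T p - T (p - δ) := by
  obtain ⟨ux, hmem, heq⟩ := (hT (p - δ)).1
  have heq' : (p - δ) * ux.2 - Cost w c ux = T (p - δ) := heq
  have hln : (p - δ) * m - Cost w c ((1:ℝ), m) ≤ T (p - δ) := (hT (p - δ)).2 ⟨(1, m), hm, rfl⟩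
  have hcm : Cost w c ((1:ℝ), m) = w + c m := by simp [Cost]
  rw [hcm] at hln
  by_cases hy : ux.2 ≤ d
  · exfalso
    have h1 : p * ux.2 - Cost w c ux ≤ T p - s * (m - ux.2) := hdom ux hmem hy
    nlinarith [hln, h1, heq']
  · push_neg at hy
    have h2 : p * ux.2 - Cost w c ux ≤ T p := (hT p).2 ⟨ux, hmem, rfl⟩
    nlinarith [heq', h2]

set_option maxHeartbeats 2000000 in
lemma core {d w xm ε : ℝ} {c : ℝ → ℝ} (hd : 0 < d) (hw : 0 ≤ w) (hxm : 0 < xm)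
    (hε : 0 < ε) (hconv : ConvexOn ℝ (Icc 0 xm) c) (hc0 : c 0 = 0)
    {dpf : ℝ → ℝ} (hdp : ∀ y ∈ Ico (0:ℝ) xm, HasDerivWithinAt c (dpf y) (Icc y xm) y)
    (hnot : ¬ (d < xm ∧ ∀ y ∈ Ioc (0:ℝ) d, dpf y < (w + c y) / y))
    {π πh : ℝ → ℝ}
    (hπ : ∀ p, IsGreatest ((fun ux => p * ux.2 - Cost w c ux) '' Gen xm) (π p))
    (hπh : ∀ p, IsGreatest ((fun ux => p * ux.2 - Cost w c ux) '' Ghat xm (min d xm) ε) (πh p))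
    {p : ℝ} (hbad : πh p < π p) :
    ∃ δ > 0, δ * d < π p - π (p - δ) ∧ δ * d < πh p - πh (p - δ) := by
  have hmin0 : 0 < min d xm := lt_min hd hxm
  -- πh p ≥ 0
  have h00 : ((0:ℝ), (0:ℝ)) ∈ Ghat xm (min d xm) ε := by
    refine ⟨⟨Or.inl rfl, le_refl 0, by simp⟩, by show (0:ℝ) ≤ min d xm + ε; positivity⟩
  have hπh0 : 0 ≤ πh p := by
    have h1 : p * (0:ℝ) - Cost w c ((0:ℝ), (0:ℝ)) ≤ πh p := (hπh p).2 ⟨(0, 0), h00, rfl⟩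
    simp [Cost, hc0] at h1
    linarith
  -- optimizer of π p
  obtain ⟨⟨u, x⟩, hmem, heq⟩ := (hπ p).1
  have heqv : p * x - Cost w c (u, x) = π p := heq
  obtain ⟨hu, hx0, hxle⟩ := hmem
  simp only at hu hx0 hxle
  have hu1 : u = 1 := by
    rcases hu with h | h
    · exfalso
      rw [h, zero_mul] at hxle
      have hx : x = 0 := le_antisymm hxle hx0
      rw [h, hx] at heqv
      simp [Cost, hc0] at heqv
      linarith
    · exact h
  subst hu1
  have hxle' : x ≤ xm := by rw [one_mul] at hxle; exact hxle
  have hπpx : π p = p * x - (w + c x) := by rw [← heqv]; simp [Cost]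
  -- (1,x) not in Ghat
  have hxgt' : min d xm + ε < x := by
    by_contra hcon
    push_neg at hcon
    have h1 : p * x - Cost w c ((1:ℝ), x) ≤ πh p :=
      (hπh p).2 ⟨(1, x), ⟨⟨Or.inr rfl, hx0, by rw [one_mul]; exact hxle'⟩, hcon⟩, rfl⟩
    simp [Cost] at h1
    rw [hπpx] at hbad
    linarith
  have hdxm : d < xm := by
    by_contra h
    push_neg at h
    rw [min_eq_right h] at hxgt'
    linarith
  have hmin : min d xm = d := min_eq_left hdxm.le
  rw [hmin] at hxgt'
  -- y0 with slope condition
  rw [not_and] at hnot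
  have hnot2 := hnot hdxm
  push_neg at hnot2
  obtain ⟨y0, hy0mem, hy0⟩ := hnot2
  obtain ⟨hy0pos, hy0d⟩ := hy0mem
  -- upper bound over Gen
  have hgle : ∀ y, 0 ≤ y → y ≤ xm → p * y - (w + c y) ≤ p * x - (w + c x) := by
    intro y h0 h1
    have h2 : p * y - Cost w c ((1:ℝ), y) ≤ π p :=
      (hπ p).2 ⟨(1, y), ⟨Or.inr rfl, h0, by rw [one_mul]; exact h1⟩, rfl⟩
    simp [Cost] at h2
    rw [hπpx] at *
    linarith
  have hgx_pos : 0 < p * x - (w + c x) := by rw [hπpx] at hbad; linarith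
  -- Claim D: g y0 > 0
  have hgy0 : 0 < p * y0 - (w + c y0) := by
    by_contra hcon
    push_neg at hcon
    have hple : p ≤ dpf y0 := by
      have h2 : p ≤ (w + c y0) / y0 := (le_div_iff₀ hy0pos).2 (by linarith)
      linarith [hy0]
    have hder := hdp y0 ⟨hy0pos.le, by linarith⟩
    have hsl : dpf y0 * (x - y0) ≤ c x - c y0 :=
      deriv_le_slope hconv hy0pos.le (by linarith) hxle' hder
    have h3 : p * (x - y0) ≤ dpf y0 * (x - y0) :=
      mul_le_mul_of_nonneg_right hple (by linarith)
    nlinarith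
  -- general concavity inequality against x
  have hx_icc : x ∈ Icc (0:ℝ) xm := ⟨hx0, hxle'⟩
  have hconc : ∀ a t, 0 ≤ a → a ≤ t → t ≤ x →
      (x - t) * (p * a - (w + c a)) + (t - a) * (p * x - (w + c x))
        ≤ (p * t - (w + c t)) * (x - a) := by
    intro a t h0 h1 h2
    have h3 := conv_ineq hconv ⟨h0, by linarith⟩ hx_icc h1 h2
    nlinarith [h3]
  have hgde_pos : 0 < p * (d + ε) - (w + c (d + ε)) := by
    have h := hconc y0 (d + ε) hy0pos.le (by linarith) (by linarith)
    nlinarith [mul_pos (show (0:ℝ) < x - (d + ε) by linarith) hgy0,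
      mul_pos (show (0:ℝ) < d + ε - y0 by linarith) hgx_pos]
  -- πh p = g (d+ε)
  have hde_mem : ((1:ℝ), d + ε) ∈ Ghat xm (min d xm) ε := by
    refine ⟨⟨Or.inr rfl, by show (0:ℝ) ≤ d + ε; positivity, by show d + ε ≤ 1 * xm; rw [one_mul]; linarith⟩, by show d + ε ≤ min d xm + ε; rw [hmin]⟩
  have hπh_eq : πh p = p * (d + ε) - (w + c (d + ε)) := by
    apply le_antisymm
    · obtain ⟨⟨u', y'⟩, hmem', heq2⟩ := (hπh p).1
      have heq2' : p * y' - Cost w c (u', y') = πh p := heq2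
      obtain ⟨⟨hu', hy'0, hy'le⟩, hy'de⟩ := hmem'
      simp only at hu' hy'0 hy'le hy'de
      rw [hmin] at hy'de
      rcases hu' with h | h
      · rw [h, zero_mul] at hy'le
        have hy'eq : y' = 0 := le_antisymm hy'le hy'0
        rw [h, hy'eq] at heq2'
        simp [Cost, hc0] at heq2'
        linarith
      · rw [h, one_mul] at hy'le
        rw [h] at heq2'
        have hval : πh p = p * y' - (w + c y') := by rw [← heq2']; simp [Cost]
        rcases eq_or_lt_of_le hy'de with he | he
        · rw [hval, he]
        · have h1 := hconc y' (d + ε) hy'0 he.le (by linarith)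
          have h2 := hgle y' hy'0 hy'le
          rw [hval]
          nlinarith [sub_pos.2 (show y' < x by linarith)]
    · have h1 : p * (d + ε) - Cost w c ((1:ℝ), d + ε) ≤ πh p := (hπh p).2 ⟨(1, d + ε), hde_mem, rfl⟩
      simp [Cost] at h1
      linarith
  -- g d ≤ πh p
  have hgd_le : p * d - (w + c d) ≤ πh p := by
    have hdm : ((1:ℝ), d) ∈ Ghat xm (min d xm) ε := by
      refine ⟨⟨Or.inr rfl, hd.le, by show d ≤ 1 * xm; rw [one_mul]; linarith⟩, by show d ≤ min d xm + ε; rw [hmin]; linarith⟩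
    have h1 : p * d - Cost w c ((1:ℝ), d) ≤ πh p := (hπh p).2 ⟨(1, d), hdm, rfl⟩
    simp [Cost] at h1
    linarith
  have hxpos : 0 < x := by linarith
  have hdepos : 0 < d + ε := by linarith
  have hgd_lt : (p * d - (w + c d)) < (p * x - (w + c x)) := by
    have h := hbad; rw [hπpx] at h; linarith [hgd_le]
  have hgde_lt : (p * (d + ε) - (w + c (d + ε))) < (p * x - (w + c x)) := by
    have h := hbad; rw [hπpx, hπh_eq] at h; exact h
  obtain ⟨sA, hsApos, hsAx, hsAdom⟩ :
      ∃ s : ℝ, 0 < s ∧ s * x ≤ (p * x - (w + c x)) ∧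
        ∀ y', 0 ≤ y' → y' ≤ d → s * (x - y') ≤ (p * x - (w + c x)) - (p * y' - (w + c y')) := by
    refine ⟨min (((p * x - (w + c x)) - (p * d - (w + c d))) / (x - d)) ((p * x - (w + c x)) / x), ?_, ?_, ?_⟩
    · exact lt_min (div_pos (by linarith) (by linarith)) (div_pos hgx_pos hxpos)
    · exact (le_div_iff₀ hxpos).1 (min_le_right _ _)
    · intro y' h0 h1
      have hcj := hconc y' d h0 h1 (by linarith)
      have hcross : ((p * x - (w + c x)) - (p * d - (w + c d))) * (x - y') ≤ ((p * x - (w + c x)) - (p * y' - (w + c y'))) * (x - d) := by linarith [hcj]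
      have h2 : (((p * x - (w + c x)) - (p * d - (w + c d))) / (x - d)) * (x - y') ≤ (p * x - (w + c x)) - (p * y' - (w + c y')) := by
        rw [div_mul_eq_mul_div, div_le_iff₀ (show (0:ℝ) < x - d by linarith)]
        linarith [hcross]
      have h3 := mul_le_mul_of_nonneg_right
        (min_le_left (((p * x - (w + c x)) - (p * d - (w + c d))) / (x - d)) ((p * x - (w + c x)) / x)) (show (0:ℝ) ≤ x - y' by linarith)
      linarith
  obtain ⟨sB, hsBpos, hsBx, hsBdom⟩ :
      ∃ s : ℝ, 0 < s ∧ s * (d + ε) ≤ (p * (d + ε) - (w + c (d + ε))) ∧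
        ∀ y', 0 ≤ y' → y' ≤ d → s * (d + ε - y') ≤ (p * (d + ε) - (w + c (d + ε))) - (p * y' - (w + c y')) := by
    refine ⟨min (((p * x - (w + c x)) - (p * (d + ε) - (w + c (d + ε)))) / (x - (d + ε))) ((p * (d + ε) - (w + c (d + ε))) / (d + ε)), ?_, ?_, ?_⟩
    · exact lt_min (div_pos (by linarith) (by linarith)) (div_pos hgde_pos hdepos)
    · exact (le_div_iff₀ hdepos).1 (min_le_right _ _)
    · intro y' h0 h1
      have hcj := hconc y' (d + ε) h0 (by linarith) (by linarith)
      have hcross : ((p * x - (w + c x)) - (p * (d + ε) - (w + c (d + ε)))) * (d + ε - y') ≤ ((p * (d + ε) - (w + c (d + ε))) - (p * y' - (w + c y'))) * (x - (d + ε)) := by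
        linarith [hcj]
      have h2 : (((p * x - (w + c x)) - (p * (d + ε) - (w + c (d + ε)))) / (x - (d + ε))) * (d + ε - y') ≤ (p * (d + ε) - (w + c (d + ε))) - (p * y' - (w + c y')) := by
        rw [div_mul_eq_mul_div, div_le_iff₀ (show (0:ℝ) < x - (d + ε) by linarith)]
        linarith [hcross]
      have h3 := mul_le_mul_of_nonneg_right
        (min_le_left (((p * x - (w + c x)) - (p * (d + ε) - (w + c (d + ε)))) / (x - (d + ε))) ((p * (d + ε) - (w + c (d + ε))) / (d + ε)))
        (show (0:ℝ) ≤ d + ε - y' by linarith)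
      linarith
  obtain ⟨δ, hδpos, hδA, hδB⟩ : ∃ δ : ℝ, 0 < δ ∧ δ < sA ∧ δ < sB := by
    refine ⟨min sA sB / 2, half_pos (lt_min hsApos hsBpos), ?_, ?_⟩
    · have h1 := min_le_left sA sB
      have h2 := lt_min hsApos hsBpos
      linarith
    · have h1 := min_le_right sA sB
      have h2 := lt_min hsApos hsBpos
      linarith
  refine ⟨δ, hδpos, ?_, ?_⟩
  · -- π part : S = Gen xm, m = x
    refine drop (le_refl (Gen xm)) hπ ⟨Or.inr rfl, hx0, by show x ≤ 1 * xm; rw [one_mul]; exact hxle'⟩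
      (by linarith : d < x) hπpx ?_ hδpos hδA
    rintro ⟨u', y'⟩ ⟨hu', hy'0, hy'le⟩ hy'd
    simp only at hu' hy'0 hy'le hy'd ⊢
    rw [hπpx]
    rcases hu' with h | h
    · rw [h, zero_mul] at hy'le
      have hy'eq : y' = 0 := le_antisymm hy'le hy'0
      rw [h, hy'eq]
      simp only [Cost, mul_zero, zero_mul, hc0, add_zero, sub_zero, zero_sub, neg_zero, mul_one]
      linarith [hsAx]
    · rw [h, one_mul] at hy'le
      rw [h]
      have hcost : Cost w c ((1:ℝ), y') = w + c y' := by simp [Cost]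
      rw [hcost]
      linarith [hsAdom y' hy'0 hy'd]
  · -- πh part : S = Ghat, m = d + ε
    refine drop (fun ux h => h.1) hπh hde_mem (by linarith : d < d + ε) hπh_eq ?_ hδpos hδB
    rintro ⟨u', y'⟩ ⟨⟨hu', hy'0, hy'le⟩, hy'de⟩ hy'd
    simp only at hu' hy'0 hy'le hy'de hy'd ⊢
    rw [hπh_eq]
    rcases hu' with h | h
    · rw [h, zero_mul] at hy'le
      have hy'eq : y' = 0 := le_antisymm hy'le hy'0
      rw [h, hy'eq]
      simp only [Cost, mul_zero, zero_mul, hc0, add_zero, sub_zero, zero_sub, neg_zero, mul_one]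
      linarith [hsBx]
    · rw [h, one_mul] at hy'le
      rw [h]
      have hcost : Cost w c ((1:ℝ), y') = w + c y' := by simp [Cost]
      rw [hcost]
      linarith [hsBdom y' hy'0 hy'd]


set_option maxHeartbeats 2000000 in
/-- Proposition 5: the truncation `x ≤ x^c,max + ε` can be dropped in the dual problem for
every non-LNMGU generator: (a) `P̄⁺(ε) = P̂⁺(ε)`; (b) `π_i(p) = π̂_i(p,ε_i)` for `p ∈ P̂⁺(ε)`
and `i ∈ Ī`; (c) `v̄^D(ε) = v̂^D(ε)`.  Here `Î` (the LNMGUs) consists of the generators with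
`xmax i > d` and `(w_i + c_i y)/y > ∂₊c_i(y)` on `(0, d]`, and `Ī` is its complement. -/
theorem stmt_4 (n : ℕ) (d : ℝ) (hd : 0 < d)
    (w xmax : Fin n → ℝ) (c : Fin n → ℝ → ℝ)
    (hxmax : ∀ i, 0 < xmax i) (hw : ∀ i, 0 ≤ w i)
    (hconv : ∀ i, ConvexOn ℝ (Set.Icc 0 (xmax i)) (c i))
    (hmono : ∀ i, MonotoneOn (c i) (Set.Icc 0 (xmax i)))
    (hcont : ∀ i, ContinuousOn (c i) (Set.Icc 0 (xmax i)))
    (hc0 : ∀ i, c i 0 = 0)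
    (hfeas : d ≤ ∑ i, xmax i)
    (dp : Fin n → ℝ → ℝ)
    (hdp : ∀ i, ∀ y ∈ Set.Ico (0 : ℝ) (xmax i),
      HasDerivWithinAt (c i) (dp i y) (Set.Icc y (xmax i)) y)
    (Ihat : Finset (Fin n))
    (hIhat : ∀ i, i ∈ Ihat ↔
      (d < xmax i ∧ ∀ y ∈ Set.Ioc (0 : ℝ) d, dp i y < (w i + c i y) / y))
    (ε : Fin n → ℝ) (hε : ∀ i, 0 < ε i)
    (π πh : ℝ → Fin n → ℝ)
    (hπ : ∀ p i, IsGreatest ((fun ux => p * ux.2 - Cost (w i) (c i) ux) ''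
        Gen (xmax i)) (π p i))
    (hπh : ∀ p i, IsGreatest ((fun ux => p * ux.2 - Cost (w i) (c i) ux) ''
        Ghat (xmax i) (xcmax n xmax d i) (ε i)) (πh p i))
    (vDbar vDh : ℝ)
    (hvDbar : IsLUB (Set.range fun p =>
        p * d - ∑ i ∈ Ihatᶜ, π p i - ∑ i ∈ Ihat, πh p i) vDbar)
    (hvDh : IsLUB (Set.range fun p => p * d - ∑ i, πh p i) vDh) :
    {p : ℝ | ∀ q, q * d - ∑ i ∈ Ihatᶜ, π q i - ∑ i ∈ Ihat, πh q i
        ≤ p * d - ∑ i ∈ Ihatᶜ, π p i - ∑ i ∈ Ihat, πh p i}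
      = {p : ℝ | ∀ q, q * d - ∑ i, πh q i ≤ p * d - ∑ i, πh p i}
    ∧ (∀ p ∈ {p : ℝ | ∀ q, q * d - ∑ i, πh q i ≤ p * d - ∑ i, πh p i},
        ∀ i ∈ Ihatᶜ, π p i = πh p i)
    ∧ vDbar = vDh := by
  classical
  have hGsub : ∀ i, Ghat (xmax i) (xcmax n xmax d i) (ε i) ⊆ Gen (xmax i) := fun i ux h => h.1
  -- πh ≤ π
  have hsub : ∀ p i, πh p i ≤ π p i := by
    intro p i
    obtain ⟨ux, hmem, heq⟩ := (hπh p i).1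
    exact heq ▸ (hπ p i).2 ⟨ux, hmem.1, rfl⟩
  -- monotonicity in p
  have hmoπ : ∀ i ⦃q p' : ℝ⦄, q ≤ p' → π q i ≤ π p' i := fun i q p' h =>
    greatest_mono (le_refl (Gen (xmax i))) (hπ q i) (hπ p' i) h
  have hmoπh : ∀ i ⦃q p' : ℝ⦄, q ≤ p' → πh q i ≤ πh p' i := fun i q p' h =>
    greatest_mono (hGsub i) (hπh q i) (hπh p' i) h
  -- nonnegativity of πh
  have hπh0 : ∀ p i, 0 ≤ πh p i := by
    intro p i
    have h00 : ((0:ℝ), (0:ℝ)) ∈ Ghat (xmax i) (xcmax n xmax d i) (ε i) := by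
      refine ⟨⟨Or.inl rfl, le_refl 0, by simp⟩, ?_⟩
      show (0:ℝ) ≤ xcmax n xmax d i + ε i
      have : 0 < xcmax n xmax d i := lt_min hd (hxmax i)
      linarith [hε i]
    have h1 : p * (0:ℝ) - Cost (w i) (c i) ((0:ℝ), (0:ℝ)) ≤ πh p i := (hπh p i).2 ⟨(0, 0), h00, rfl⟩
    simp [Cost, hc0 i] at h1
    linarith
  -- the core perturbation
  have hcore : ∀ (p' : ℝ) (i : Fin n), i ∉ Ihat → πh p' i < π p' i →
      ∃ δ > 0, δ * d < π p' i - π (p' - δ) i ∧ δ * d < πh p' i - πh (p' - δ) i := by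
    intro p' i hi hbad
    have hnot : ¬ (d < xmax i ∧ ∀ y ∈ Set.Ioc (0:ℝ) d, dp i y < (w i + c i y) / y) :=
      fun hcon => hi ((hIhat i).2 hcon)
    exact core hd (hw i) (hxmax i) (hε i) (hconv i) (hc0 i) (hdp i) hnot
      (fun q => hπ q i) (fun q => hπh q i) hbad
  -- sums helpers
  have hsplit : ∀ t : ℝ, (∀ i ∈ Ihatᶜ, π t i = πh t i) →
      t * d - ∑ i ∈ Ihatᶜ, π t i - ∑ i ∈ Ihat, πh t i = t * d - ∑ i, πh t i := by
    intro t hg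
    rw [Finset.sum_congr rfl hg]
    have h2 := Finset.sum_compl_add_sum Ihat (fun i => πh t i)
    linarith
  have hFble : ∀ q : ℝ, q * d - ∑ i ∈ Ihatᶜ, π q i - ∑ i ∈ Ihat, πh q i
      ≤ q * d - ∑ i, πh q i := by
    intro q
    have h1 : ∑ i ∈ Ihatᶜ, πh q i ≤ ∑ i ∈ Ihatᶜ, π q i :=
      Finset.sum_le_sum fun i _ => hsub q i
    have h2 := Finset.sum_compl_add_sum Ihat (fun i => πh q i)
    linarith
  -- key for maximizers of Fh
  have keyB : ∀ p ∈ {p : ℝ | ∀ q, q * d - ∑ i, πh q i ≤ p * d - ∑ i, πh p i},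
      ∀ i ∈ Ihatᶜ, π p i = πh p i := by
    intro p hp i hi
    rw [Finset.mem_compl] at hi
    by_contra hne
    have hbad : πh p i < π p i := lt_of_le_of_ne (hsub p i) (Ne.symm hne)
    obtain ⟨δ, hδ, -, hB⟩ := hcore p i hi hbad
    have hq := hp (p - δ)
    have e1 : ∑ j, πh p j - ∑ j, πh (p - δ) j = ∑ j, (πh p j - πh (p - δ) j) :=
      (Finset.sum_sub_distrib _ _).symm
    have h1 : πh p i - πh (p - δ) i ≤ ∑ j, (πh p j - πh (p - δ) j) :=
      Finset.single_le_sum (fun j _ => sub_nonneg.2 (hmoπh j (by linarith))) (Finset.mem_univ i)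
    nlinarith [hq, h1, e1]
  -- key for maximizers of Fb
  have keyA : ∀ p : ℝ, (∀ q : ℝ, q * d - ∑ i ∈ Ihatᶜ, π q i - ∑ i ∈ Ihat, πh q i
        ≤ p * d - ∑ i ∈ Ihatᶜ, π p i - ∑ i ∈ Ihat, πh p i) →
      ∀ i ∈ Ihatᶜ, π p i = πh p i := by
    intro p hp i hi
    have hic := hi
    rw [Finset.mem_compl] at hic
    by_contra hne
    have hbad : πh p i < π p i := lt_of_le_of_ne (hsub p i) (Ne.symm hne)
    obtain ⟨δ, hδ, hA, -⟩ := hcore p i hic hbad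
    have hq := hp (p - δ)
    have e1 : ∑ j ∈ Ihatᶜ, π p j - ∑ j ∈ Ihatᶜ, π (p - δ) j
        = ∑ j ∈ Ihatᶜ, (π p j - π (p - δ) j) := (Finset.sum_sub_distrib _ _).symm
    have h1 : π p i - π (p - δ) i ≤ ∑ j ∈ Ihatᶜ, (π p j - π (p - δ) j) :=
      Finset.single_le_sum (fun j _ => sub_nonneg.2 (hmoπ j (by linarith))) hi
    have e2 : ∑ j ∈ Ihat, πh p j - ∑ j ∈ Ihat, πh (p - δ) j
        = ∑ j ∈ Ihat, (πh p j - πh (p - δ) j) := (Finset.sum_sub_distrib _ _).symm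
    have h2 : (0:ℝ) ≤ ∑ j ∈ Ihat, (πh p j - πh (p - δ) j) :=
      Finset.sum_nonneg fun j _ => sub_nonneg.2 (hmoπh j (by linarith))
    nlinarith [hq, h1, h2, e1, e2]
  -- continuity of Fh
  have hlip : ∀ i, Continuous (fun p => πh p i) := by
    intro i
    apply LipschitzWith.continuous (K := Real.toNNReal (xmax i))
    apply LipschitzWith.of_dist_le_mul
    intro a b
    rw [Real.dist_eq, Real.dist_eq, Real.coe_toNNReal _ (hxmax i).le]
    rcases le_total a b with h | h
    · have h1 := hmoπh i h
      have h2 := greatest_lip (hxmax i).le (hGsub i) (hπh a i) (hπh b i) h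
      rw [abs_of_nonpos (by linarith), abs_of_nonpos (by linarith)]
      linarith
    · have h1 := hmoπh i h
      have h2 := greatest_lip (hxmax i).le (hGsub i) (hπh b i) (hπh a i) h
      rw [abs_of_nonneg (by linarith), abs_of_nonneg (by linarith)]
      linarith
  have hcontFh : Continuous (fun t : ℝ => t * d - ∑ i, πh t i) :=
    (continuous_id.mul continuous_const).sub
      (continuous_finset_sum _ fun i _ => hlip i)
  -- (c) : every value of Fh is ≤ vDbar
  have hFh_ub : ∀ q : ℝ, q * d - ∑ i, πh q i ≤ vDbar := by
    intro q
    set Fh : ℝ → ℝ := fun t => t * d - ∑ i, πh t i with hFhdef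
    set A : Set ℝ := {t | t ≤ q ∧ Fh q ≤ Fh t} with hAdef
    have hclosed : IsClosed A :=
      (isClosed_le continuous_id continuous_const).inter (isClosed_le continuous_const hcontFh)
    have hne : A.Nonempty := ⟨q, le_refl q, le_refl _⟩
    have hbdd : BddBelow A := by
      refine ⟨Fh q / d, fun t ht => ?_⟩
      have h0 : 0 ≤ ∑ i, πh t i := Finset.sum_nonneg fun i _ => hπh0 t i
      have h1 : Fh t ≤ t * d := by simp only [hFhdef]; linarith
      have h2 : Fh q ≤ t * d := le_trans ht.2 h1
      exact (div_le_iff₀ hd).2 h2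
    have ht0A : sInf A ∈ A := hclosed.csInf_mem hne hbdd
    set t0 := sInf A with ht0def
    have hgood : ∀ i ∈ Ihatᶜ, π t0 i = πh t0 i := by
      intro i hi
      rw [Finset.mem_compl] at hi
      by_contra hne2
      obtain ⟨δ, hδ, -, hB⟩ := hcore t0 i hi (lt_of_le_of_ne (hsub t0 i) (Ne.symm hne2))
      have e1 : ∑ j, πh t0 j - ∑ j, πh (t0 - δ) j = ∑ j, (πh t0 j - πh (t0 - δ) j) :=
        (Finset.sum_sub_distrib _ _).symm
      have h1 : πh t0 i - πh (t0 - δ) i ≤ ∑ j, (πh t0 j - πh (t0 - δ) j) :=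
        Finset.single_le_sum (fun j _ => sub_nonneg.2 (hmoπh j (by linarith))) (Finset.mem_univ i)
      have hFlt : Fh t0 < Fh (t0 - δ) := by
        simp only [hFhdef]
        nlinarith [h1, e1]
      have hmem2 : t0 - δ ∈ A := ⟨by linarith [ht0A.1], le_trans ht0A.2 hFlt.le⟩
      have hle := csInf_le hbdd hmem2
      rw [← ht0def] at hle
      linarith
    have hsp := hsplit t0 hgood
    have hub : t0 * d - ∑ i ∈ Ihatᶜ, π t0 i - ∑ i ∈ Ihat, πh t0 i ≤ vDbar :=
      hvDbar.1 ⟨t0, rfl⟩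
    have : Fh q ≤ Fh t0 := ht0A.2
    simp only [hFhdef] at this
    linarith
  have hc : vDbar = vDh := by
    apply le_antisymm
    · apply hvDbar.2
      rintro v ⟨q, rfl⟩
      exact le_trans (hFble q) (hvDh.1 ⟨q, rfl⟩)
    · apply hvDh.2
      rintro v ⟨q, rfl⟩
      exact hFh_ub q
  refine ⟨?_, keyB, hc⟩
  ext p
  simp only [Set.mem_setOf_eq]
  constructor
  · intro hp q
    have hgood := keyA p hp
    have hsp := hsplit p hgood
    have hvb : p * d - ∑ i ∈ Ihatᶜ, π p i - ∑ i ∈ Ihat, πh p i = vDbar :=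
      le_antisymm (hvDbar.1 ⟨p, rfl⟩) (hvDbar.2 (by rintro v ⟨q', rfl⟩; exact hp q'))
    have h1 : q * d - ∑ i, πh q i ≤ vDh := hvDh.1 ⟨q, rfl⟩
    rw [← hc] at h1
    linarith
  · intro hp q
    have hgood := keyB p hp
    have hsp := hsplit p hgood
    have h1 := hp q
    linarith [hFble q]


end
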